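/- If f : A → B is a ring epimorphism with Tor_1^A(B, B) = 0, then Tor_1^A(B, coker(f)) = 0. -/

import Mathlib

open CategoryTheory CategoryTheory.Limits CategoryTheory.MonoidalCategory
open scoped TensorProduct

universe u

namespace TorVanishAux

/-- Pure linear algebra: exactness of the tensored spliced sequence is equivalent to
injectivity of `N ⊗ ι`. -/
lemma exact_lTensor_iff_injective {A : Type*} [CommRing A]
    (N : Type*) {K P Q0 Q1 : Type*}
    [AddCommGroup N] [AddCommGroup K] [AddCommGroup P] [AddCommGroup Q0] [AddCommGroup Q1]
    [Module A N] [Module A K] [Module A P] [Module A Q0] [Module A Q1]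
    (d : Q1 →ₗ[A] Q0) (π : Q0 →ₗ[A] K) (ι : K →ₗ[A] P)
    (hd : Function.Exact d π) (hπ : Function.Surjective π) :
    Function.Exact (LinearMap.lTensor N d) (LinearMap.lTensor N (ι ∘ₗ π)) ↔
      Function.Injective (LinearMap.lTensor N ι) := by
  have hE : Function.Exact (LinearMap.lTensor N d) (LinearMap.lTensor N π) :=
    lTensor_exact N hd hπ
  have hS : Function.Surjective (LinearMap.lTensor N π) := LinearMap.lTensor_surjective N hπ
  have hcomp : ∀ x, LinearMap.lTensor N (ι ∘ₗ π) x =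
      LinearMap.lTensor N ι (LinearMap.lTensor N π x) := by
    intro x
    rw [LinearMap.lTensor_comp]
    rfl
  constructor
  · intro hex
    rw [injective_iff_map_eq_zero]
    intro x hx
    obtain ⟨y, rfl⟩ := hS x
    have h0 : LinearMap.lTensor N (ι ∘ₗ π) y = 0 := by rw [hcomp]; exact hx
    obtain ⟨z, rfl⟩ := (hex y).1 h0
    have : π ∘ₗ d = 0 := LinearMap.ext fun w => hd.apply_apply_eq_zero w
    calc LinearMap.lTensor N π (LinearMap.lTensor N d z)
        = LinearMap.lTensor N (π ∘ₗ d) z := by rw [LinearMap.lTensor_comp]; rfl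
      _ = 0 := by rw [this, LinearMap.lTensor_zero]; rfl
  · intro hinj y
    constructor
    · intro hy
      have h0 : LinearMap.lTensor N ι (LinearMap.lTensor N π y) = 0 := by
        rw [← hcomp]; exact hy
      have h1 : LinearMap.lTensor N π y = 0 := by
        rw [injective_iff_map_eq_zero] at hinj
        exact hinj _ h0
      exact (hE y).1 h1
    · rintro ⟨z, rfl⟩
      rw [hcomp]
      have : LinearMap.lTensor N π (LinearMap.lTensor N d z) = 0 := (hE _).2 ⟨z, rfl⟩
      rw [this, map_zero]


variable {A : Type u} [CommRing A]

section Splice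

variable {P M : ModuleCat.{u} A} (p : P ⟶ M)

/-- A chosen projective resolution of the kernel of `p`. -/
noncomputable def Q : ProjectiveResolution (ModuleCat.of A (LinearMap.ker p.hom)) :=
  ProjectiveResolution.of _

/-- The augmentation of `Q`. -/
noncomputable def pi0 : (Q p).complex.X 0 ⟶ ModuleCat.of A (LinearMap.ker p.hom) := (Q p).π.f 0

/-- The inclusion of the kernel. -/
def iota : ModuleCat.of A (LinearMap.ker p.hom) ⟶ P := ModuleCat.ofHom (LinearMap.ker p.hom).subtype

/-- Objects of the spliced resolution. -/
noncomputable def RX : ℕ → ModuleCat.{u} A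
  | 0 => P
  | (n+1) => (Q p).complex.X n

/-- Differentials of the spliced resolution. -/
noncomputable def Rd : ∀ n : ℕ, RX p (n+1) ⟶ RX p n
  | 0 => pi0 p ≫ iota p
  | (n+1) => (Q p).complex.d (n+1) n

lemma Rsq : ∀ n : ℕ, Rd p (n+1) ≫ Rd p n = 0 := by
  rintro (_|n)
  · show (Q p).complex.d 1 0 ≫ (pi0 p ≫ iota p) = 0
    rw [← Category.assoc]
    have h : (Q p).complex.d 1 0 ≫ pi0 p = 0 := (Q p).complex_d_comp_π_f_zero
    rw [h, Limits.zero_comp]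
  · exact (Q p).complex.d_comp_d _ _ _

/-- The spliced chain complex. -/
noncomputable def RC : ChainComplex (ModuleCat.{u} A) ℕ :=
  ChainComplex.of (RX p) (Rd p) (Rsq p)

lemma RC_d_one_zero : (RC p).d 1 0 = pi0 p ≫ iota p := by
  show (RC p).d (0+1) 0 = _
  unfold RC
  exact ChainComplex.of_d (RX p) (Rd p) 0

lemma RC_d_succ (n : ℕ) : (RC p).d (n+2) (n+1) = (Q p).complex.d (n+1) n := by
  show (RC p).d ((n+1)+1) (n+1) = _
  unfold RC
  exact ChainComplex.of_d _ _ (n+1)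

lemma pi0_surjective : Function.Surjective (pi0 p) := by
  have h : Epi ((Q p).π.f 0) := inferInstance
  rw [ModuleCat.epi_iff_surjective] at h
  exact h

lemma RCd_comp_p : (RC p).d 1 0 ≫ p = 0 := by
  rw [RC_d_one_zero]; show (pi0 p ≫ iota p) ≫ p = 0; rw [Category.assoc]
  have h : iota p ≫ p = 0 := by
    ext x
    exact x.2
  rw [h, Limits.comp_zero]

lemma range_pi0_comp_iota : LinearMap.range (pi0 p ≫ iota p).hom = LinearMap.ker p.hom := by
  have : (pi0 p ≫ iota p).hom = (iota p).hom.comp (pi0 p).hom := rfl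
  rw [this, LinearMap.range_comp, (LinearMap.range_eq_top (f := (pi0 p).hom)).2 (pi0_surjective p),
    Submodule.map_top]
  exact Submodule.range_subtype _

lemma ker_pi0_comp_iota : LinearMap.ker (pi0 p ≫ iota p).hom = LinearMap.ker (pi0 p).hom := by
  have : (pi0 p ≫ iota p).hom = (iota p).hom.comp (pi0 p).hom := rfl
  rw [this, LinearMap.ker_comp]
  have : LinearMap.ker (iota p).hom = ⊥ := Submodule.ker_subtype _
  rw [this, Submodule.comap_bot]

lemma exact_Q_zero : LinearMap.range ((Q p).complex.d 1 0).hom = LinearMap.ker (pi0 p).hom :=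
  ((Q p).exact₀).moduleCat_range_eq_ker

lemma exact_Q_succ (n : ℕ) :
    LinearMap.range ((Q p).complex.d (n+2) (n+1)).hom = LinearMap.ker ((Q p).complex.d (n+1) n).hom := by
  have h := (Q p).complex_exactAt_succ n
  rw [HomologicalComplex.exactAt_iff' _ (n+2) (n+1) n (by simp) (by simp)] at h
  exact h.moduleCat_range_eq_ker

/-- The spliced projective resolution of `M`. -/
noncomputable def Rres [Projective P] (hp : Function.Surjective p) : ProjectiveResolution M where
  complex := RC p
  projective := by
    rintro (_|n)
    · show Projective P; infer_instance
    · show Projective ((Q p).complex.X n); infer_instance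
  π := (ChainComplex.toSingle₀Equiv _ _).symm ⟨p, by
    rw [RC_d_one_zero]; show (pi0 p ≫ iota p) ≫ p = 0; rw [Category.assoc]
    have : iota p ≫ p = 0 := by
      ext x
      exact x.2
    rw [this, Limits.comp_zero]⟩
  quasiIso := ⟨fun n => by
    cases n with
    | zero =>
      rw [ChainComplex.quasiIsoAt₀_iff, ShortComplex.quasiIso_iff_of_zeros']
      · refine (ShortComplex.exact_and_epi_g_iff_of_iso
          (S₂ := ShortComplex.mk ((RC p).d 1 0) p (RCd_comp_p p)) ?_).2 ⟨?_, ?_⟩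
        · exact ShortComplex.isoMk (Iso.refl _) (Iso.refl _) (Iso.refl _)
            (by ext; rfl) (by ext x; rfl)
        · rw [ShortComplex.moduleCat_exact_iff_range_eq_ker]
          show LinearMap.range ((RC p).d 1 0).hom = LinearMap.ker p.hom
          rw [RC_d_one_zero]; exact range_pi0_comp_iota p
        · rw [ModuleCat.epi_iff_surjective]
          exact hp
      all_goals rfl
    | succ n =>
      rw [quasiIsoAt_iff_exactAt' _ _ (ChainComplex.exactAt_succ_single_obj _ _)]
      rw [HomologicalComplex.exactAt_iff' _ (n+2) (n+1) n (by simp) (by simp)]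
      rw [ShortComplex.moduleCat_exact_iff_range_eq_ker]
      show LinearMap.range ((RC p).d (n+2) (n+1)).hom = LinearMap.ker ((RC p).d (n+1) n).hom
      cases n with
      | zero =>
        rw [RC_d_succ, RC_d_one_zero]
        exact (exact_Q_zero p).trans (ker_pi0_comp_iota p).symm
      | succ m =>
        rw [RC_d_succ, RC_d_succ]
        exact exact_Q_succ p m⟩

/-- `Tor₁(N, M)` computed from the spliced resolution. -/
noncomputable def torIso [Projective P] (hp : Function.Surjective p) (N : ModuleCat.{u} A) :
    ((Tor (ModuleCat.{u} A) 1).obj N).obj M ≅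
      (HomologicalComplex.homologyFunctor _ _ 1).obj
        ((((tensoringLeft (ModuleCat.{u} A)).obj N).mapHomologicalComplex _).obj (RC p)) :=
  (Rres p hp).isoLeftDerivedObj ((tensoringLeft (ModuleCat.{u} A)).obj N) 1

lemma RC_d_two_one : (RC p).d 2 1 = (Q p).complex.d 1 0 := RC_d_succ p 0

theorem isZero_tor_iff [Projective P] (hp : Function.Surjective p) (N : ModuleCat.{u} A) :
    IsZero (((Tor (ModuleCat.{u} A) 1).obj N).obj M) ↔
      Function.Injective (LinearMap.lTensor N (LinearMap.ker p.hom).subtype) := by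
  classical
  set F := (tensoringLeft (ModuleCat.{u} A)).obj N with hF
  rw [(torIso p hp N).isZero_iff]
  rw [show (HomologicalComplex.homologyFunctor (ModuleCat.{u} A) (ComplexShape.down ℕ) 1).obj
      ((F.mapHomologicalComplex _).obj (RC p)) =
      ((F.mapHomologicalComplex _).obj (RC p)).homology 1 from rfl]
  rw [← HomologicalComplex.exactAt_iff_isZero_homology]
  rw [HomologicalComplex.exactAt_iff' _ 2 1 0 (by simp) (by simp)]
  rw [ShortComplex.ShortExact.moduleCat_exact_iff_function_exact]
  have hf : (((F.mapHomologicalComplex _).obj (RC p)).sc' 2 1 0).f =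
      F.map ((Q p).complex.d 1 0) := by
    show F.map ((RC p).d 2 1) = _
    rw [RC_d_two_one]
    exact rfl
  have hg : (((F.mapHomologicalComplex _).obj (RC p)).sc' 2 1 0).g =
      F.map (pi0 p ≫ iota p) := by
    show F.map ((RC p).d 1 0) = _
    rw [RC_d_one_zero]
    exact rfl
  rw [hf, hg]
  have hd : Function.Exact ((Q p).complex.d 1 0).hom
      (pi0 p).hom := by
    rw [LinearMap.exact_iff]
    exact (exact_Q_zero p).symm
  exact exact_lTensor_iff_injective N _ _ _ hd (pi0_surjective p)

end Splice

section Mult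

variable {B : Type u} [CommRing B] [Algebra A B]

lemma inj_lTensor_range :
    Function.Injective
      (LinearMap.lTensor B (LinearMap.range (Algebra.linearMap A B)).subtype) := by
  set rng := LinearMap.range (Algebra.linearMap A B) with hrng
  have h1 : (1 : B) ∈ rng := ⟨1, by simp⟩
  set e : rng := ⟨1, h1⟩ with he
  set c : B ⊗[A] rng →ₗ[A] B :=
    (LinearMap.mul' A B) ∘ₗ (LinearMap.lTensor B rng.subtype) with hc
  set s : B →ₗ[A] B ⊗[A] rng := (TensorProduct.mk A B rng).flip e with hs
  have hsc : ∀ x, s (c x) = x := by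
    intro x
    induction x using TensorProduct.induction_on with
    | zero => simp
    | tmul b y =>
      obtain ⟨a, ha⟩ := y.2
      have hy : (y : B) = algebraMap A B a := by
        rw [← ha]; rfl
      have hcy : c (b ⊗ₜ y) = b * (y : B) := by
        simp [hc, LinearMap.mul'_apply]
      rw [hcy]
      show (b * (y : B)) ⊗ₜ[A] e = b ⊗ₜ[A] y
      have hyy : y = a • e := by
        apply Subtype.ext
        show (y : B) = a • (1 : B)
        rw [hy, Algebra.smul_def, mul_one]
      conv_rhs => rw [hyy, TensorProduct.tmul_smul, TensorProduct.smul_tmul']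
      congr 1
      rw [hy, Algebra.smul_def, mul_comm]
    | add x₁ x₂ ih₁ ih₂ => rw [map_add, map_add, ih₁, ih₂]
  have hcinj : Function.Injective c := Function.LeftInverse.injective hsc
  have : Function.Injective
      (⇑(LinearMap.mul' A B) ∘ ⇑(LinearMap.lTensor B rng.subtype)) := by
    rw [← LinearMap.coe_comp]
    exact hcinj
  exact this.of_comp

end Mult

end TorVanishAux

/-- A ring homomorphism is an epimorphism in the category of rings. -/
def IsRingEpi {A B : Type*} [Ring A] [Ring B] (f : A →+* B) : Prop :=
  ∀ (C : Type*) [Ring C] (g₁ g₂ : B →+* C), g₁.comp f = g₂.comp f → g₁ = g₂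

/-- If `f : A → B` is a ring epimorphism with `Tor₁^A(B, B) = 0`, then
`Tor₁^A(B, coker(f)) = 0`, where `coker(f) = B / f(A)`. -/
theorem Tor_one_coker_eq_zero {A B : Type u} [CommRing A] [CommRing B] [Algebra A B]
    (h : IsRingEpi (algebraMap A B))
    (hTor : IsZero (((Tor (ModuleCat.{u} A) 1).obj (ModuleCat.of A B)).obj (ModuleCat.of A B))) :
    IsZero (((Tor (ModuleCat.{u} A) 1).obj (ModuleCat.of A B)).obj
      (ModuleCat.of A (B ⧸ LinearMap.range (Algebra.linearMap A B)))) := by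
  classical
  set rng := LinearMap.range (Algebra.linearMap A B) with hrng
  let P0 : ModuleCat.{u} A := ModuleCat.of A (B →₀ A)
  haveI : CategoryTheory.Projective P0 :=
    ModuleCat.projective_of_free (Finsupp.basisSingleOne)
  let pB : P0 ⟶ ModuleCat.of A B := ModuleCat.ofHom (Finsupp.linearCombination A (id : B → B))
  have hpB : Function.Surjective pB := fun b => ⟨Finsupp.single b 1, by
    show Finsupp.linearCombination A (id : B → B) (Finsupp.single b 1) = b
    simp⟩
  let q : P0 ⟶ ModuleCat.of A (B ⧸ rng) := pB ≫ ModuleCat.ofHom rng.mkQ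
  have hq : Function.Surjective q := (Submodule.mkQ_surjective rng).comp hpB
  set KB := LinearMap.ker pB.hom with hKB
  set KC := LinearMap.ker q.hom with hKC
  have injB : Function.Injective (LinearMap.lTensor B KB.subtype) :=
    (TorVanishAux.isZero_tor_iff pB hpB (ModuleCat.of A B)).1 hTor
  rw [TorVanishAux.isZero_tor_iff q hq (ModuleCat.of A B)]
  show Function.Injective (LinearMap.lTensor B KC.subtype)
  have hle : KB ≤ KC := by
    intro x hx
    have hx' : pB x = 0 := LinearMap.mem_ker.1 hx
    apply LinearMap.mem_ker.2
    show rng.mkQ (pB x) = 0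
    rw [hx', map_zero]
  let incl : KB →ₗ[A] KC := Submodule.inclusion hle
  have hmem' : ∀ x : KC, (pB.hom ∘ₗ KC.subtype) x ∈ rng := by
    intro x
    have hx : rng.mkQ (pB x.1) = 0 := LinearMap.mem_ker.1 x.2
    rwa [Submodule.mkQ_apply, Submodule.Quotient.mk_eq_zero] at hx
  let r : KC →ₗ[A] rng := LinearMap.codRestrict rng (pB.hom ∘ₗ KC.subtype) hmem'
  have hrs : Function.Surjective r := by
    rintro ⟨b, hb⟩
    obtain ⟨x, hx⟩ := hpB b
    have hxKC : x ∈ KC := by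
      apply LinearMap.mem_ker.2
      show rng.mkQ (pB x) = 0
      rw [hx, Submodule.mkQ_apply, Submodule.Quotient.mk_eq_zero]
      exact hb
    exact ⟨⟨x, hxKC⟩, Subtype.ext hx⟩
  have hex : Function.Exact incl r := by
    intro y
    constructor
    · intro hy
      have hy' : pB y.1 = 0 := congrArg Subtype.val hy
      exact ⟨⟨y.1, LinearMap.mem_ker.2 hy'⟩, Subtype.ext rfl⟩
    · rintro ⟨z, rfl⟩
      apply Subtype.ext
      show pB z.1 = 0
      exact LinearMap.mem_ker.1 z.2
  have TE : Function.Exact (LinearMap.lTensor B incl) (LinearMap.lTensor B r) :=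
    lTensor_exact B hex hrs
  have hrng_inj : Function.Injective (LinearMap.lTensor B rng.subtype) :=
    TorVanishAux.inj_lTensor_range
  rw [injective_iff_map_eq_zero]
  intro x hx
  have hcomm1 : rng.subtype ∘ₗ r = pB.hom ∘ₗ KC.subtype :=
    LinearMap.subtype_comp_codRestrict _ _ _
  have h1 : LinearMap.lTensor B rng.subtype (LinearMap.lTensor B r x) = 0 := by
    have e1 : LinearMap.lTensor B rng.subtype ∘ₗ LinearMap.lTensor B r
        = LinearMap.lTensor B pB.hom ∘ₗ LinearMap.lTensor B KC.subtype := by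
      rw [← LinearMap.lTensor_comp, ← LinearMap.lTensor_comp, hcomm1]
    calc LinearMap.lTensor B rng.subtype (LinearMap.lTensor B r x)
        = (LinearMap.lTensor B rng.subtype ∘ₗ LinearMap.lTensor B r) x := rfl
      _ = (LinearMap.lTensor B pB.hom ∘ₗ LinearMap.lTensor B KC.subtype) x :=
          LinearMap.congr_fun e1 x
      _ = LinearMap.lTensor B pB.hom (LinearMap.lTensor B KC.subtype x) := rfl
      _ = 0 := by rw [hx, map_zero]
  have h2 : LinearMap.lTensor B r x = 0 := by
    rw [injective_iff_map_eq_zero] at hrng_inj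
    exact hrng_inj _ h1
  obtain ⟨y, rfl⟩ := (TE x).1 h2
  have hcomm2 : KC.subtype ∘ₗ incl = KB.subtype := rfl
  have h3 : LinearMap.lTensor B KB.subtype y = 0 := by
    calc LinearMap.lTensor B KB.subtype y
        = LinearMap.lTensor B (KC.subtype ∘ₗ incl) y := by rw [hcomm2]
      _ = LinearMap.lTensor B KC.subtype (LinearMap.lTensor B incl y) := by
          rw [LinearMap.lTensor_comp]; rfl
      _ = 0 := hx
  rw [injective_iff_map_eq_zero] at injB
  rw [injB y h3, map_zero]
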